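/- Let P(x₁,…,x_k) be a symmetric polynomial of total degree strictly less than k(n−k) over a field of characteristic zero, with k < n, and let λ₁,…,λₙ be distinct. Then ∑_{I⊂[n], |I|=k} P(λ_I) / ∏_{i∈I} ∏_{j∈Iᶜ}(λ_i−λ_j) = 0. -/

import Mathlib

open Finset MvPolynomial

section Helpers

open Polynomial in
lemma leadingCoeff_lagrange_basis {F : Type*} [Field F] {ι : Type*} [DecidableEq ι]
    (s : Finset ι) (v : ι → F) (i : ι) :
    (Lagrange.basis s v i).leadingCoeff = ∏ j ∈ s.erase i, (v i - v j)⁻¹ := by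
  unfold Lagrange.basis
  rw [leadingCoeff_prod]
  refine Finset.prod_congr rfl fun j _ => ?_
  unfold Lagrange.basisDivisor
  by_cases h : v i = v j
  · simp [h]
  · rw [leadingCoeff_mul, leadingCoeff_C, (monic_X_sub_C (v j)).leadingCoeff, mul_one]

open Polynomial in
lemma lemA {F : Type*} [Field F] {n : ℕ} (lam : Fin n → F) (hlam : Function.Injective lam)
    {d : ℕ} (hd : d < n - 1) :
    ∑ i : Fin n, lam i ^ d / ∏ j ∈ univ.erase i, (lam i - lam j) = 0 := by
  have hinj : Set.InjOn lam (univ : Finset (Fin n)) := fun a _ b _ h => hlam h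
  have hcard : ((univ : Finset (Fin n))).card = n := by simp
  have hdeg : (Polynomial.X ^ d : F[X]).degree < ((univ : Finset (Fin n))).card := by
    rw [Polynomial.degree_X_pow, hcard]
    exact_mod_cast by omega
  have h := Lagrange.eq_interpolate (f := (Polynomial.X ^ d : F[X])) hinj hdeg
  have h2 := congrArg (fun p => Polynomial.coeff p (n - 1)) h
  simp only [Lagrange.interpolate_apply] at h2
  rw [Polynomial.coeff_X_pow, if_neg (by omega), Polynomial.finset_sum_coeff] at h2
  have h3 : ∑ i : Fin n, lam i ^ d / ∏ j ∈ univ.erase i, (lam i - lam j)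
      = ∑ b : Fin n, (Polynomial.C (Polynomial.eval (lam b) (Polynomial.X ^ d : F[X]))
          * Lagrange.basis univ lam b).coeff (n - 1) := by
    refine Finset.sum_congr rfl fun i _ => ?_
    rw [Polynomial.coeff_C_mul]
    have hnd : (Lagrange.basis univ lam i).natDegree = n - 1 := by
      rw [Lagrange.natDegree_basis hinj (mem_univ i), hcard]
    rw [show n - 1 = (Lagrange.basis univ lam i).natDegree from hnd.symm,
      Polynomial.coeff_natDegree, leadingCoeff_lagrange_basis]
    rw [div_eq_mul_inv, ← Finset.prod_inv_distrib]
    simp [Polynomial.eval_pow]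
  rw [h3, ← h2]

lemma prod_offDiag_image {α β M : Type*} [CommMonoid M] [DecidableEq α] [DecidableEq β] [Fintype β]
    (e : β → α) (he : Function.Injective e) (I : Finset α) (hI : Finset.image e univ = I)
    (f : α × α → M) :
    ∏ p ∈ I.offDiag, f p = ∏ p ∈ (univ : Finset β).offDiag, f (e p.1, e p.2) := by
  refine (Finset.prod_bij (fun p _ => (e p.1, e p.2)) ?_ ?_ ?_ ?_).symm
  · intro p hp
    rw [Finset.mem_offDiag] at hp ⊢
    subst hI
    exact ⟨mem_image_of_mem _ (mem_univ _), mem_image_of_mem _ (mem_univ _),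
      fun h => hp.2.2 (he h)⟩
  · intro p _ q _ h
    rw [Prod.mk.injEq] at h
    exact Prod.ext (he h.1) (he h.2)
  · intro p hp
    rw [Finset.mem_offDiag] at hp
    obtain ⟨hp1, hp2, hp3⟩ := hp
    rw [← hI] at hp1 hp2
    obtain ⟨a, -, ha⟩ := mem_image.mp hp1
    obtain ⟨b, -, hb⟩ := mem_image.mp hp2
    refine ⟨(a, b), ?_, by simp [ha, hb]⟩
    rw [Finset.mem_offDiag]
    exact ⟨mem_univ _, mem_univ _,
      fun h => hp3 (by simp only [] at h; rw [← ha, ← hb, h])⟩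
  · intro p _; rfl

lemma prod_offDiag_eq {α M : Type*} [CommMonoid M] [DecidableEq α] (s : Finset α)
    (f : α → α → M) :
    ∏ p ∈ s.offDiag, f p.1 p.2 = ∏ i ∈ s, ∏ j ∈ s.erase i, f i j := by
  rw [show s.offDiag = (s ×ˢ s).filter (fun a => a.1 ≠ a.2) from by ext; simp [Finset.mem_offDiag, and_assoc],
    Finset.prod_filter, Finset.prod_product]
  refine Finset.prod_congr rfl fun i _ => ?_
  rw [← Finset.filter_ne' s i, Finset.prod_filter]
  refine Finset.prod_congr rfl fun j _ => ?_
  simp [ne_comm]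

lemma W_symm {F : Type*} [CommRing F] (k : ℕ) :
    (∏ p ∈ (univ : Finset (Fin k)).offDiag,
      (X p.1 - X p.2 : MvPolynomial (Fin k) F)).IsSymmetric := by
  intro σ
  rw [map_prod]
  simp only [map_sub, rename_X]
  exact (prod_offDiag_image σ σ.injective univ (by simp [Finset.image_univ_equiv])
    (fun p => (X p.1 - X p.2 : MvPolynomial (Fin k) F))).symm

end Helpers

theorem sum_symm_eval_div_prod_eq_zero {F : Type*} [Field F] [CharZero F]
    (n k : ℕ) (hk : k < n) (lam : Fin n → F) (hlam : Function.Injective lam)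
    (P : MvPolynomial (Fin k) F) (hPsymm : P.IsSymmetric)
    (hPdeg : P.totalDegree < k * (n - k)) :
    ∑ I : {s : Finset (Fin n) // s.card = k},
        (MvPolynomial.eval (fun i => lam ((I.1.orderIsoOfFin I.2) i : Fin n)) P) /
          ∏ i ∈ I.1, ∏ j ∈ I.1ᶜ, (lam i - lam j) = 0 := by
  classical
  rcases Nat.eq_zero_or_pos k with hk0 | hkpos
  · subst hk0; simp at hPdeg
  set w : Fin n → F := fun i => ∏ j ∈ univ.erase i, (lam i - lam j) with hw
  have hlamne : ∀ {i j : Fin n}, i ≠ j → lam i - lam j ≠ 0 :=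
    fun h => sub_ne_zero.mpr (fun he => h (hlam he))
  have hwne : ∀ i, w i ≠ 0 := by
    intro i
    refine Finset.prod_ne_zero_iff.mpr fun j hj => ?_
    exact hlamne (fun he => (Finset.mem_erase.mp hj).1 he.symm)
  set W : MvPolynomial (Fin k) F :=
    ∏ p ∈ (univ : Finset (Fin k)).offDiag, (X p.1 - X p.2) with hWdef
  set Q : MvPolynomial (Fin k) F := P * W with hQdef
  have hQsymm : Q.IsSymmetric := fun σ => by
    rw [hQdef, map_mul, hPsymm σ, W_symm k σ]
  have hWdeg : W.totalDegree ≤ k * (k - 1) := by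
    refine le_trans (totalDegree_finset_prod _ _) ?_
    refine le_trans (Finset.sum_le_card_nsmul _ _ 1 ?_) ?_
    · intro p _
      refine le_trans (totalDegree_sub _ _) ?_
      simp [totalDegree_X]
    · rw [smul_eq_mul, mul_one, Finset.offDiag_card, card_univ, Fintype.card_fin]
      cases k with
      | zero => simp
      | succ m => simp [Nat.succ_sub_one, Nat.succ_mul, Nat.mul_succ]
  have hQdeg : Q.totalDegree < k * (n - 1) := by
    have h1 : Q.totalDegree ≤ P.totalDegree + W.totalDegree := totalDegree_mul _ _
    have h2 : P.totalDegree + W.totalDegree < k * (n - k) + k * (k - 1) :=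
      Nat.add_lt_add_of_lt_of_le hPdeg hWdeg
    have h3 : k * (n - k) + k * (k - 1) = k * (n - 1) := by
      rw [← Nat.mul_add]; congr 1; omega
    omega
  have hdlt : ∀ d ∈ Q.support, ∃ a : Fin k, (d : (Fin k) →₀ ℕ) a < n - 1 := by
    intro d hd
    by_contra hcon
    push_neg at hcon
    have hsum : k * (n - 1) ≤ ∑ a : Fin k, d a := by
      calc k * (n - 1) = ∑ _a : Fin k, (n - 1) := by
            rw [Finset.sum_const, card_univ, Fintype.card_fin, smul_eq_mul]
        _ ≤ ∑ a, d a := Finset.sum_le_sum fun a _ => hcon a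
    have hle : (d.sum fun _ e => e) ≤ Q.totalDegree := le_totalDegree hd
    rw [Finsupp.sum_fintype _ _ (fun _ => rfl)] at hle
    omega
  set T : (Fin k → Fin n) → F :=
    fun f => eval (fun a => lam (f a)) Q / ∏ a, w (f a) with hT
  have hTsum : ∑ f : Fin k → Fin n, T f = 0 := by
    have heach : ∀ f : Fin k → Fin n,
        T f = ∑ d ∈ Q.support, Q.coeff d * ∏ a, (lam (f a) ^ d a / w (f a)) := by
      intro f
      rw [hT]
      simp only []
      rw [eval_eq', Finset.sum_div]
      refine Finset.sum_congr rfl fun d _ => ?_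
      rw [mul_div_assoc, ← Finset.prod_div_distrib]
    rw [Finset.sum_congr rfl (fun f _ => heach f), Finset.sum_comm]
    refine Finset.sum_eq_zero fun d hd => ?_
    rw [← Finset.mul_sum]
    have hps : ∑ f : Fin k → Fin n, ∏ a, (lam (f a) ^ d a / w (f a))
        = ∏ a : Fin k, ∑ i : Fin n, lam i ^ d a / w i :=
      (Fintype.prod_sum (fun a i => lam i ^ d a / w i)).symm
    rw [hps]
    obtain ⟨a, ha⟩ := hdlt d hd
    rw [Finset.prod_eq_zero (Finset.mem_univ a) (lemA lam hlam ha), mul_zero]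
  have hT0 : ∀ f : Fin k → Fin n, ¬ Function.Injective f → T f = 0 := by
    intro f hf
    rw [Function.not_injective_iff] at hf
    obtain ⟨a, b, hab, hne⟩ := hf
    have hWz : eval (fun a => lam (f a)) W = 0 := by
      rw [hWdef, map_prod]
      have hmemo : (a, b) ∈ (univ : Finset (Fin k)).offDiag := by
        simp [Finset.mem_offDiag, hne]
      refine Finset.prod_eq_zero hmemo ?_
      simp [hab]
    rw [hT]
    simp only []
    rw [hQdef, map_mul, hWz, mul_zero, zero_div]
  have hfil : ∑ f ∈ univ.filter (fun f : Fin k → Fin n => Function.Injective f), T f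
      = ∑ f : Fin k → Fin n, T f :=
    Finset.sum_filter_of_ne (fun f _ hne => by
      by_contra h; exact hne (hT0 f h))
  have hembInj : ∀ (I : Finset (Fin n)) (h : I.card = k) (σ : Equiv.Perm (Fin k)),
      Function.Injective (fun a => ((I.orderIsoOfFin h) (σ a) : Fin n)) := by
    intro I h σ a b hab
    exact σ.injective ((I.orderIsoOfFin h).injective (Subtype.coe_injective hab))
  have himg : ∀ (I : Finset (Fin n)) (h : I.card = k) (σ : Equiv.Perm (Fin k)),
      Finset.image (fun a => ((I.orderIsoOfFin h) (σ a) : Fin n)) univ = I := by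
    intro I h σ
    refine Finset.eq_of_subset_of_card_le ?_ ?_
    · intro x hx
      obtain ⟨a, -, ha⟩ := Finset.mem_image.mp hx
      rw [← ha]; exact ((I.orderIsoOfFin h) (σ a)).2
    · rw [h, Finset.card_image_of_injective _ (hembInj I h σ), card_univ, Fintype.card_fin]
  have hbij : ∑ f ∈ univ.filter (fun f : Fin k → Fin n => Function.Injective f), T f
      = ∑ p : {s : Finset (Fin n) // s.card = k} × Equiv.Perm (Fin k),
          T (fun a => ((p.1.1.orderIsoOfFin p.1.2) (p.2 a) : Fin n)) := by
    refine (Finset.sum_bij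
      (fun (p : {s : Finset (Fin n) // s.card = k} × Equiv.Perm (Fin k)) _ =>
        fun a => ((p.1.1.orderIsoOfFin p.1.2) (p.2 a) : Fin n)) ?_ ?_ ?_ ?_).symm
    · intro p _
      rw [Finset.mem_filter]
      exact ⟨mem_univ _, hembInj _ _ _⟩
    · intro p _ q _ hpq
      have hpq' : (fun a => ((p.1.1.orderIsoOfFin p.1.2) (p.2 a) : Fin n))
          = (fun a => ((q.1.1.orderIsoOfFin q.1.2) (q.2 a) : Fin n)) := hpq
      have hI : p.1.1 = q.1.1 := by
        have h1 := himg p.1.1 p.1.2 p.2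
        have h2 := himg q.1.1 q.1.2 q.2
        rw [hpq'] at h1
        rw [← h1]; exact h2
      obtain ⟨⟨I, hcard⟩, σ⟩ := p
      obtain ⟨⟨I', hcard'⟩, σ'⟩ := q
      simp only at hI
      subst hI
      have hσ : σ = σ' := by
        refine Equiv.ext fun a => ?_
        have hfa : ((I.orderIsoOfFin hcard) (σ a) : Fin n)
            = ((I.orderIsoOfFin hcard') (σ' a) : Fin n) := congrFun hpq' a
        exact (I.orderIsoOfFin hcard).injective (Subtype.coe_injective hfa)
      exact Prod.ext (Subtype.ext rfl) hσ
    · intro f hf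
      have hfinj : Function.Injective f := (Finset.mem_filter.mp hf).2
      have hcI : (Finset.image f univ).card = k := by
        rw [Finset.card_image_of_injective _ hfinj, card_univ, Fintype.card_fin]
      have hmem : ∀ a, f a ∈ Finset.image f univ :=
        fun a => Finset.mem_image_of_mem f (mem_univ a)
      have hg : Function.Injective
          (fun a => ((Finset.image f univ).orderIsoOfFin hcI).symm ⟨f a, hmem a⟩) := by
        intro a b hab
        have h2 := congrArg (fun x => ((((Finset.image f univ).orderIsoOfFin hcI) x : _) : Fin n)) hab
        simp only [OrderIso.apply_symm_apply] at h2
        exact hfinj h2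
      refine ⟨(⟨Finset.image f univ, hcI⟩,
        Equiv.ofBijective _ (Finite.injective_iff_bijective.mp hg)), mem_univ _, ?_⟩
      funext a
      simp [Equiv.ofBijective_apply]
    · intro p _; rfl
  have hTpair : ∀ (I : {s : Finset (Fin n) // s.card = k}) (σ : Equiv.Perm (Fin k)),
      T (fun a => ((I.1.orderIsoOfFin I.2) (σ a) : Fin n))
        = eval (fun a => lam ((I.1.orderIsoOfFin I.2) a : Fin n)) Q / ∏ i ∈ I.1, w i := by
    intro I σ
    rw [hT]
    simp only []
    congr 1
    · conv_rhs => rw [← hQsymm σ]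
      rw [eval_rename]
      rfl
    · rw [show (∏ a : Fin k, w ((I.1.orderIsoOfFin I.2) (σ a) : Fin n))
          = ∏ a : Fin k, w ((I.1.orderIsoOfFin I.2) a : Fin n) from
        Equiv.prod_comp σ (fun a => w ((I.1.orderIsoOfFin I.2) a : Fin n))]
      have h1 : ∏ i ∈ Finset.image
            (fun a => ((I.1.orderIsoOfFin I.2) ((Equiv.refl (Fin k)) a) : Fin n)) univ, w i
          = ∏ a : Fin k, w ((I.1.orderIsoOfFin I.2) ((Equiv.refl (Fin k)) a) : Fin n) :=
        Finset.prod_image (fun a _ b _ hab => hembInj I.1 I.2 (Equiv.refl _) hab)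
      rw [himg I.1 I.2 (Equiv.refl _)] at h1
      rw [h1]
      exact Finset.prod_congr rfl fun a _ => rfl
  have hTermQ : ∀ I : {s : Finset (Fin n) // s.card = k},
      eval (fun a => lam ((I.1.orderIsoOfFin I.2) a : Fin n)) Q / ∏ i ∈ I.1, w i
        = eval (fun a => lam ((I.1.orderIsoOfFin I.2) a : Fin n)) P /
            ∏ i ∈ I.1, ∏ j ∈ I.1ᶜ, (lam i - lam j) := by
    intro I
    set gI : Fin k → F := fun a => lam ((I.1.orderIsoOfFin I.2) a : Fin n) with hgI
    have hWv : eval gI W = ∏ p ∈ I.1.offDiag, (lam p.1 - lam p.2) := by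
      rw [hWdef, map_prod,
        prod_offDiag_image (fun a => ((I.1.orderIsoOfFin I.2) a : Fin n))
          (hembInj I.1 I.2 (Equiv.refl _)) I.1 (himg I.1 I.2 (Equiv.refl _))
          (fun p => lam p.1 - lam p.2)]
      refine Finset.prod_congr rfl fun p _ => ?_
      simp [hgI]
    have hWvne : eval gI W ≠ 0 := by
      rw [hWv]
      refine Finset.prod_ne_zero_iff.mpr fun p hp => ?_
      exact hlamne (Finset.mem_offDiag.mp hp).2.2
    have hWv' : eval gI W = ∏ i ∈ I.1, ∏ j ∈ I.1.erase i, (lam i - lam j) := by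
      rw [hWv]
      have h := prod_offDiag_eq (M := F) I.1 (fun i j => lam i - lam j)
      simpa using h
    have hsplit : ∏ i ∈ I.1, w i
        = eval gI W * ∏ i ∈ I.1, ∏ j ∈ I.1ᶜ, (lam i - lam j) := by
      rw [hWv', ← Finset.prod_mul_distrib]
      refine Finset.prod_congr rfl fun i hi => ?_
      show (∏ j ∈ univ.erase i, (lam i - lam j)) = _
      rw [← Finset.prod_union
        (Disjoint.mono_left (Finset.erase_subset _ _) disjoint_compl_right)]
      congr 1
      ext j
      simp only [Finset.mem_erase, Finset.mem_univ, and_true, Finset.mem_union,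
        Finset.mem_compl]
      constructor
      · intro hj
        by_cases hjI : j ∈ I.1
        · exact Or.inl ⟨hj, hjI⟩
        · exact Or.inr hjI
      · rintro (⟨hj, -⟩ | hj)
        · exact hj
        · exact fun he => hj (he ▸ hi)
    rw [hQdef, map_mul, hsplit, mul_comm (eval gI P) (eval gI W),
      mul_div_mul_left _ _ hWvne]
  have hcount : ∑ p : {s : Finset (Fin n) // s.card = k} × Equiv.Perm (Fin k),
      T (fun a => ((p.1.1.orderIsoOfFin p.1.2) (p.2 a) : Fin n))
      = ((Nat.factorial k : ℕ) : F) * ∑ I : {s : Finset (Fin n) // s.card = k},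
          (MvPolynomial.eval (fun i => lam ((I.1.orderIsoOfFin I.2) i : Fin n)) P) /
            ∏ i ∈ I.1, ∏ j ∈ I.1ᶜ, (lam i - lam j) := by
    rw [Fintype.sum_prod_type, Finset.mul_sum]
    refine Finset.sum_congr rfl fun I _ => ?_
    have hval : ∀ σ : Equiv.Perm (Fin k),
        T (fun a => ((I.1.orderIsoOfFin I.2) (σ a) : Fin n))
        = eval (fun a => lam ((I.1.orderIsoOfFin I.2) a : Fin n)) P /
            ∏ i ∈ I.1, ∏ j ∈ I.1ᶜ, (lam i - lam j) := by
      intro σ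
      rw [hTpair I σ, hTermQ I]
    rw [Finset.sum_congr rfl (fun σ _ => hval σ), Finset.sum_const, card_univ,
      Fintype.card_perm, Fintype.card_fin, nsmul_eq_mul]
  have hfinal : ((Nat.factorial k : ℕ) : F) * ∑ I : {s : Finset (Fin n) // s.card = k},
      (MvPolynomial.eval (fun i => lam ((I.1.orderIsoOfFin I.2) i : Fin n)) P) /
        ∏ i ∈ I.1, ∏ j ∈ I.1ᶜ, (lam i - lam j) = 0 := by
    rw [← hcount, ← hbij, hfil, hTsum]
  have hkfac : ((Nat.factorial k : ℕ) : F) ≠ 0 := Nat.cast_ne_zero.mpr (Nat.factorial_ne_zero k)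
  exact (mul_eq_zero.mp hfinal).resolve_left hkfac
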